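/- Let μ, t ∈ ℝ and σ > 0. The supremum of E[(X−t)₊²] over all symmetric distributions with mean μ and variance σ² equals: σ² + (t−μ)² if t ≤ μ − σ; (1/2)(μ − t + σ)² if μ − σ < t ≤ μ; and σ²/2 if t > μ. -/

import Mathlib

open MeasureTheory Filter Topology ENNReal NNReal

private lemma refl_map (P : Measure ℝ) [IsFiniteMeasure P] (a : ℝ)
    (hsym : ∀ x : ℝ, P {z | a + x < z} = P {z | z < a - x}) :
    P.map (fun z => 2*a - z) = P := by
  have key : ∀ y : ℝ, P (Set.Iic y) = P (Set.Ici (2*a - y)) := by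
    intro y
    have h1 : Tendsto (P ∘ (fun n : ℕ => Set.Iio (y + 1/(n+1)))) atTop
        (𝓝 (P (⋂ n : ℕ, Set.Iio (y + 1/(n+1))))) := by
      apply tendsto_measure_iInter_atTop
      · exact fun n => measurableSet_Iio.nullMeasurableSet
      · intro n m hnm
        apply Set.Iio_subset_Iio
        have hc : (n:ℝ) ≤ m := by exact_mod_cast hnm
        have : (1:ℝ)/(m+1) ≤ 1/(n+1) :=
          one_div_le_one_div_of_le (by positivity) (by linarith)
        linarith
      · exact ⟨0, measure_ne_top _ _⟩
    have h2 : Tendsto (P ∘ (fun n : ℕ => Set.Ioi (2*a - y - 1/(n+1)))) atTop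
        (𝓝 (P (⋂ n : ℕ, Set.Ioi (2*a - y - 1/(n+1))))) := by
      apply tendsto_measure_iInter_atTop
      · exact fun n => measurableSet_Ioi.nullMeasurableSet
      · intro n m hnm
        apply Set.Ioi_subset_Ioi
        have hc : (n:ℝ) ≤ m := by exact_mod_cast hnm
        have : (1:ℝ)/(m+1) ≤ 1/(n+1) :=
          one_div_le_one_div_of_le (by positivity) (by linarith)
        linarith
      · exact ⟨0, measure_ne_top _ _⟩
    have e1 : (⋂ n : ℕ, Set.Iio (y + 1/(n+1))) = Set.Iic y := by
      ext z
      simp only [Set.mem_iInter, Set.mem_Iio, Set.mem_Iic]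
      constructor
      · intro h
        by_contra hc
        push_neg at hc
        obtain ⟨n, hn⟩ := exists_nat_one_div_lt (show (0:ℝ) < z - y by linarith)
        have := h n
        linarith
      · intro h n
        have : (0:ℝ) < 1/(n+1) := by positivity
        linarith
    have e2 : (⋂ n : ℕ, Set.Ioi (2*a - y - 1/(n+1))) = Set.Ici (2*a - y) := by
      ext z
      simp only [Set.mem_iInter, Set.mem_Ioi, Set.mem_Ici]
      constructor
      · intro h
        by_contra hc
        push_neg at hc
        obtain ⟨n, hn⟩ := exists_nat_one_div_lt (show (0:ℝ) < (2*a - y) - z by linarith)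
        have := h n
        linarith
      · intro h n
        have : (0:ℝ) < 1/(n+1) := by positivity
        linarith
    have efun : (P ∘ (fun n : ℕ => Set.Iio (y + 1/(n+1))))
        = (P ∘ (fun n : ℕ => Set.Ioi (2*a - y - 1/(n+1)))) := by
      funext n
      have := (hsym (a - y - 1/(n+1))).symm
      have s1 : {z : ℝ | z < a - (a - y - 1/(n+1))} = Set.Iio (y + 1/(n+1)) := by
        ext z; simp only [Set.mem_setOf_eq, Set.mem_Iio]; constructor <;> intro <;> linarith
      have s2 : {z : ℝ | a + (a - y - 1/(n+1)) < z} = Set.Ioi (2*a - y - 1/(n+1)) := by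
        ext z; simp only [Set.mem_setOf_eq, Set.mem_Ioi]; constructor <;> intro <;> linarith
      simp only [Function.comp_apply]
      rw [← s1, ← s2]
      exact this
    rw [e1] at h1; rw [e2] at h2; rw [efun] at h1
    exact tendsto_nhds_unique h1 h2
  have hm : Measurable (fun z : ℝ => 2*a - z) := measurable_const.sub measurable_id
  apply Measure.ext_of_Iic
  intro y
  rw [Measure.map_apply hm measurableSet_Iic]
  have : (fun z : ℝ => 2*a - z) ⁻¹' (Set.Iic y) = Set.Ici (2*a - y) := by
    ext z; simp only [Set.mem_preimage, Set.mem_Iic, Set.mem_Ici]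
    constructor <;> intro <;> linarith
  rw [this, ← key]

private lemma upper_bound (P : Measure ℝ) [IsProbabilityMeasure P] (μ σ t c b : ℝ)
    (hx2 : Integrable (fun x => x^2) P)
    (a : ℝ) (hsym : ∀ x : ℝ, P {z | a + x < z} = P {z | z < a - x})
    (hmean : (∫ x, x ∂P) = μ) (hvar : (∫ x, x^2 ∂P) = μ^2 + σ^2)
    (hbd : ∀ u : ℝ, (max (u-(t-μ)) 0)^2 + (max (-u-(t-μ)) 0)^2 ≤ c + b*u^2) :
    (∫ x, (max (x - t) 0)^2 ∂P) ≤ (c + b*σ^2)/2 := by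
  have hx1 : Integrable (fun x : ℝ => x) P := by
    apply Integrable.mono' ((integrable_const (1:ℝ)).add hx2)
      measurable_id.aestronglyMeasurable
    filter_upwards with x
    simp only [Real.norm_eq_abs, Pi.add_apply, id_eq]
    nlinarith [sq_abs x, sq_nonneg (|x| - 1), abs_nonneg x]
  have hsq : ∀ r : ℝ, Integrable (fun x : ℝ => (x - r)^2) P := by
    intro r
    have e : (fun x : ℝ => (x - r)^2) = fun x => (x^2 - (2*r)*x) + r^2 := by
      funext x; ring
    rw [e]
    exact (hx2.sub (hx1.const_mul _)).add (integrable_const _)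
  have hm : Measurable (fun z : ℝ => 2*a - z) := measurable_const.sub measurable_id
  have hmap : P.map (fun z => 2*a - z) = P := refl_map P a hsym
  have ha : a = μ := by
    have h1 : (∫ x, x ∂P) = ∫ x, (2*a - x) ∂P := by
      conv_lhs => rw [← hmap]
      rw [integral_map hm.aemeasurable]
      exact measurable_id.aestronglyMeasurable
    rw [integral_sub (integrable_const _) hx1, integral_const, hmean] at h1
    have : P.real Set.univ = 1 := by simp
    rw [this] at h1
    simp at h1
    linarith
  subst ha
  set f : ℝ → ℝ := fun x => (max (x - t) 0)^2 with hf
  have hfc : Continuous f := ((continuous_id.sub continuous_const).max continuous_const).pow 2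
  have hfi : Integrable f P := by
    apply Integrable.mono' (hsq t) hfc.aestronglyMeasurable
    filter_upwards with x
    simp only [Real.norm_eq_abs, hf]
    rw [abs_of_nonneg (by positivity)]
    rcases le_total (x - t) 0 with h | h
    · rw [max_eq_right h]; nlinarith [sq_nonneg (x - t)]
    · rw [max_eq_left h]
  set g : ℝ → ℝ := fun x => (max (2*a - x - t) 0)^2 with hg
  have hgc : Continuous g :=
    (((continuous_const.sub continuous_id).sub continuous_const).max continuous_const).pow 2
  have hgi : Integrable g P := by
    have e : (fun x : ℝ => (x - (2*a - t))^2) = fun x => (2*a - x - t)^2 := by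
      funext x; ring
    apply Integrable.mono' (e ▸ hsq (2*a - t)) hgc.aestronglyMeasurable
    filter_upwards with x
    simp only [Real.norm_eq_abs, hg]
    rw [abs_of_nonneg (by positivity)]
    rcases le_total (2*a - x - t) 0 with h | h
    · rw [max_eq_right h]; nlinarith [sq_nonneg (2*a - x - t)]
    · rw [max_eq_left h]
  have hint : (∫ x, f x ∂P) = ∫ x, g x ∂P := by
    conv_lhs => rw [← hmap]
    rw [integral_map hm.aemeasurable hfc.aestronglyMeasurable]
  have hsum : (∫ x, f x ∂P) = (∫ x, (f x + g x) ∂P) / 2 := by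
    rw [integral_add hfi hgi, ← hint]; ring
  have hmom : (∫ x, (c + b*(x - a)^2) ∂P) = c + b*σ^2 := by
    have e : (fun x : ℝ => c + b*(x - a)^2)
        = fun x => (c + b*a^2) + ((-(2*b*a))*x + b*x^2) := by funext x; ring
    have i1 : Integrable (fun x : ℝ => (-(2*b*a))*x + b*x^2) P :=
      (hx1.const_mul _).add (hx2.const_mul _)
    rw [e, integral_add (integrable_const _) i1,
      integral_add (hx1.const_mul _) (hx2.const_mul _), integral_const_mul,
      integral_const_mul, integral_const, hmean, hvar]
    have : P.real Set.univ = 1 := by simp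
    rw [this, one_smul]
    ring
  rw [hsum, ← hmom]
  have hqi : Integrable (fun x : ℝ => c + b*(x - a)^2) P := by
    have e : (fun x : ℝ => c + b*(x - a)^2)
        = fun x => (c + b*a^2) + ((-(2*b*a))*x + b*x^2) := by funext x; ring
    rw [e]
    exact (integrable_const _).add ((hx1.const_mul _).add (hx2.const_mul _))
  have hmono : (∫ x, (f x + g x) ∂P) ≤ ∫ x, (c + b*(x - a)^2) ∂P := by
    apply integral_mono (hfi.add hgi) hqi
    intro x
    have h0 := hbd (x - a)
    have e1 : x - a - (t - a) = x - t := by ring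
    have e2 : -(x - a) - (t - a) = 2*a - x - t := by ring
    rw [e1, e2] at h0
    simpa [hf, hg] using h0
  linarith

private lemma bnd1 (s u : ℝ) : (max (u-s) 0)^2 + (max (-u-s) 0)^2 ≤ 2*s^2 + 2*u^2 := by
  rcases le_total (u-s) 0 with h1 | h1 <;> rcases le_total (-u-s) 0 with h2 | h2 <;>
    simp only [max_eq_right, max_eq_left, h1, h2] <;>
    nlinarith [sq_nonneg (u+s), sq_nonneg (u-s), sq_nonneg u, sq_nonneg s]

private lemma bnd3 (s u : ℝ) (hs : 0 ≤ s) :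
    (max (u-s) 0)^2 + (max (-u-s) 0)^2 ≤ 0 + 1*u^2 := by
  rcases le_total (u-s) 0 with h1 | h1 <;> rcases le_total (-u-s) 0 with h2 | h2 <;>
    simp only [max_eq_right, max_eq_left, h1, h2] <;>
    nlinarith [sq_nonneg u, sq_nonneg (u-s), sq_nonneg (u+s)]

private lemma bnd2 (s σ u : ℝ) (hσ : 0 < σ) (hs1 : s ≤ 0) (hs2 : -σ < s) :
    (max (u-s) 0)^2 + (max (-u-s) 0)^2 ≤ (-s*(σ-s)) + ((σ-s)/σ)*u^2 := by
  rw [← mul_le_mul_iff_right₀ hσ]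
  have e : σ * ((-s*(σ-s)) + ((σ-s)/σ)*u^2) = σ*(-s*(σ-s)) + (σ-s)*u^2 := by
    field_simp
  rw [e]
  rcases le_total (u-s) 0 with h1 | h1 <;> rcases le_total (-u-s) 0 with h2 | h2 <;>
    simp only [max_eq_right, max_eq_left, h1, h2]
  · nlinarith [mul_nonneg (mul_nonneg hσ.le (neg_nonneg.2 hs1)) (by linarith : (0:ℝ) ≤ σ - s),
      mul_nonneg (by linarith : (0:ℝ) ≤ σ - s) (sq_nonneg u)]
  · nlinarith [mul_nonneg (neg_nonneg.2 hs1) (sq_nonneg (u+σ)), sq_nonneg u]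
  · nlinarith [mul_nonneg (neg_nonneg.2 hs1) (sq_nonneg (u-σ)), sq_nonneg u]
  · nlinarith [mul_nonneg (by linarith : (0:ℝ) ≤ σ + s) (mul_nonneg h1 h2),
      mul_nonneg (neg_nonneg.2 hs1) (sq_nonneg (σ+s))]

noncomputable def Mdisc (μ r : ℝ) (w0 w : ℝ≥0∞) : Measure ℝ :=
  w0 • Measure.dirac μ + w • Measure.dirac (μ - r) + w • Measure.dirac (μ + r)

private lemma M_prob (μ r : ℝ) (w0 w : ℝ≥0∞) (h : w0 + w + w = 1) :
    IsProbabilityMeasure (Mdisc μ r w0 w) := by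
  constructor
  simp only [Mdisc, Measure.add_apply, Measure.smul_apply, measure_univ, smul_eq_mul, mul_one]
  exact h

private lemma M_integrable (μ r : ℝ) (w0 w : ℝ≥0∞) (hw0 : w0 ≠ ⊤) (hw : w ≠ ⊤)
    (f : ℝ → ℝ) : Integrable f (Mdisc μ r w0 w) := by
  have hd : ∀ a : ℝ, Integrable f (Measure.dirac a) := fun a =>
    (integrable_congr (ae_eq_dirac f)).2 (integrable_const _)
  exact (((hd μ).smul_measure hw0).add_measure ((hd _).smul_measure hw)).add_measure
    ((hd _).smul_measure hw)

private lemma M_integral (μ r : ℝ) (w0 w : ℝ≥0∞) (hw0 : w0 ≠ ⊤) (hw : w ≠ ⊤)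
    (f : ℝ → ℝ) :
    ∫ x, f x ∂(Mdisc μ r w0 w)
      = w0.toReal * f μ + w.toReal * f (μ - r) + w.toReal * f (μ + r) := by
  have hd : ∀ a : ℝ, Integrable f (Measure.dirac a) := fun a =>
    (integrable_congr (ae_eq_dirac f)).2 (integrable_const _)
  rw [Mdisc, integral_add_measure (((hd μ).smul_measure hw0).add_measure
      ((hd _).smul_measure hw)) ((hd _).smul_measure hw),
    integral_add_measure ((hd μ).smul_measure hw0) ((hd _).smul_measure hw),
    integral_smul_measure, integral_smul_measure, integral_smul_measure,
    integral_dirac, integral_dirac, integral_dirac]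
  simp [smul_eq_mul]

private lemma M_symm (μ r : ℝ) (w0 w : ℝ≥0∞) :
    ∀ x : ℝ, (Mdisc μ r w0 w) {z | μ + x < z} = (Mdisc μ r w0 w) {z | z < μ - x} := by
  intro x
  simp only [Mdisc, Measure.add_apply, Measure.smul_apply, Measure.dirac_apply, smul_eq_mul,
    Set.indicator_apply, Set.mem_setOf_eq, Pi.one_apply]
  have h1 : (μ + x < μ) = (μ < μ - x) := by
    apply propext; constructor <;> intro <;> linarith
  have h2 : (μ + x < μ - r) = (μ + r < μ - x) := by
    apply propext; constructor <;> intro <;> linarith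
  have h3 : (μ + x < μ + r) = (μ - r < μ - x) := by
    apply propext; constructor <;> intro <;> linarith
  simp only [h1, h2, h3]
  ring

private lemma member (μ σ t p : ℝ) (hp0 : 0 < p) (hp1 : p ≤ 1) :
    ∃ P : Measure ℝ, IsProbabilityMeasure P ∧ Integrable (fun x => x ^ 2) P ∧
      (∃ a : ℝ, ∀ x : ℝ, P {z | a + x < z} = P {z | z < a - x}) ∧
      (∫ x, x ∂P) = μ ∧ (∫ x, x ^ 2 ∂P) = μ ^ 2 + σ ^ 2 ∧
      ((1 - p^2) * (max (μ - t) 0)^2 + (p^2/2) * (max (μ - σ/p - t) 0)^2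
        + (p^2/2) * (max (μ + σ/p - t) 0)^2) = ∫ x, (max (x - t) 0) ^ 2 ∂P := by
  have hp2 : p^2 ≤ 1 := by nlinarith
  have h0 : (0:ℝ) ≤ 1 - p^2 := by linarith
  have h1 : (0:ℝ) ≤ p^2/2 := by positivity
  set w0 : ℝ≥0∞ := ENNReal.ofReal (1 - p^2) with hw0def
  set w : ℝ≥0∞ := ENNReal.ofReal (p^2/2) with hwdef
  have hw0 : w0 ≠ ⊤ := ofReal_ne_top
  have hw : w ≠ ⊤ := ofReal_ne_top
  have hw0r : w0.toReal = 1 - p^2 := toReal_ofReal h0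
  have hwr : w.toReal = p^2/2 := toReal_ofReal h1
  have hsum : w0 + w + w = 1 := by
    rw [hw0def, hwdef, ← ENNReal.ofReal_add h0 h1, ← ENNReal.ofReal_add (by linarith) h1]
    have e : 1 - p ^ 2 + p ^ 2 / 2 + p ^ 2 / 2 = 1 := by ring
    rw [e, ENNReal.ofReal_one]
  refine ⟨Mdisc μ (σ/p) w0 w, M_prob _ _ _ _ hsum, M_integrable _ _ _ _ hw0 hw _,
    ⟨μ, M_symm _ _ _ _⟩, ?_, ?_, ?_⟩
  · rw [M_integral _ _ _ _ hw0 hw _, hw0r, hwr]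
    ring
  · rw [M_integral _ _ _ _ hw0 hw _, hw0r, hwr]
    field_simp
    ring
  · rw [M_integral _ _ _ _ hw0 hw (fun x => (max (x - t) 0)^2), hw0r, hwr]

theorem stmt_3 (μ σ t : ℝ) (hσ : 0 < σ) :
    sSup {y : ℝ | ∃ P : Measure ℝ, IsProbabilityMeasure P ∧ Integrable (fun x => x ^ 2) P ∧
        (∃ a : ℝ, ∀ x : ℝ, P {z | a + x < z} = P {z | z < a - x}) ∧
        (∫ x, x ∂P) = μ ∧ (∫ x, x ^ 2 ∂P) = μ ^ 2 + σ ^ 2 ∧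
        y = ∫ x, (max (x - t) 0) ^ 2 ∂P}
      = if t ≤ μ - σ then σ ^ 2 + (t - μ) ^ 2
        else if t ≤ μ then (μ - t + σ) ^ 2 / 2
        else σ ^ 2 / 2 := by
  set S : Set ℝ := {y : ℝ | ∃ P : Measure ℝ, IsProbabilityMeasure P ∧
      Integrable (fun x => x ^ 2) P ∧
      (∃ a : ℝ, ∀ x : ℝ, P {z | a + x < z} = P {z | z < a - x}) ∧
      (∫ x, x ∂P) = μ ∧ (∫ x, x ^ 2 ∂P) = μ ^ 2 + σ ^ 2 ∧
      y = ∫ x, (max (x - t) 0) ^ 2 ∂P} with hS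
  have hmem : ∀ p : ℝ, 0 < p → p ≤ 1 →
      ((1 - p^2) * (max (μ - t) 0)^2 + (p^2/2) * (max (μ - σ/p - t) 0)^2
        + (p^2/2) * (max (μ + σ/p - t) 0)^2) ∈ S := by
    intro p hp0 hp1
    obtain ⟨P, h1, h2, h3, h4, h5, h6⟩ := member μ σ t p hp0 hp1
    exact ⟨P, h1, h2, h3, h4, h5, h6⟩
  split_ifs with hc1 hc2
  · -- t ≤ μ - σ
    have hub : ∀ y ∈ S, y ≤ σ^2 + (t-μ)^2 := by
      rintro y ⟨P, hP, hx2, ⟨a, hsymm⟩, hmean, hvar, hy⟩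
      haveI := hP
      have := upper_bound P μ σ t (2*(t-μ)^2) 2 hx2 a hsymm hmean hvar
        (fun u => bnd1 (t-μ) u)
      rw [hy]
      linarith
    have hv : ((1 - (1:ℝ)^2) * (max (μ - t) 0)^2 + ((1:ℝ)^2/2) * (max (μ - σ/1 - t) 0)^2
        + ((1:ℝ)^2/2) * (max (μ + σ/1 - t) 0)^2) = σ^2 + (t-μ)^2 := by
      rw [div_one, max_eq_left (by linarith : (0:ℝ) ≤ μ - σ - t),
        max_eq_left (by linarith : (0:ℝ) ≤ μ + σ - t)]
      ring
    apply le_antisymm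
    · exact csSup_le ⟨_, hmem 1 one_pos le_rfl⟩ hub
    · exact le_csSup ⟨_, hub⟩ (hv ▸ hmem 1 one_pos le_rfl)
  · -- μ - σ < t ≤ μ
    have hs1 : t - μ ≤ 0 := by linarith
    have hs2 : -σ < t - μ := by push_neg at hc1; linarith
    have hub : ∀ y ∈ S, y ≤ (μ - t + σ)^2/2 := by
      rintro y ⟨P, hP, hx2, ⟨a, hsymm⟩, hmean, hvar, hy⟩
      haveI := hP
      have := upper_bound P μ σ t (-(t-μ)*(σ-(t-μ))) ((σ-(t-μ))/σ) hx2 a hsymm hmean hvar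
        (fun u => bnd2 (t-μ) σ u hσ hs1 hs2)
      rw [hy]
      have e : (-(t-μ)*(σ-(t-μ)) + ((σ-(t-μ))/σ)*σ^2)/2 = (μ - t + σ)^2/2 := by
        field_simp
        ring
      linarith [e ▸ this]
    have hv : ((1 - (1:ℝ)^2) * (max (μ - t) 0)^2 + ((1:ℝ)^2/2) * (max (μ - σ/1 - t) 0)^2
        + ((1:ℝ)^2/2) * (max (μ + σ/1 - t) 0)^2) = (μ - t + σ)^2/2 := by
      push_neg at hc1
      rw [div_one, max_eq_right (by linarith : μ - σ - t ≤ (0:ℝ)),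
        max_eq_left (by linarith : (0:ℝ) ≤ μ + σ - t)]
      ring
    apply le_antisymm
    · exact csSup_le ⟨_, hmem 1 one_pos le_rfl⟩ hub
    · exact le_csSup ⟨_, hub⟩ (hv ▸ hmem 1 one_pos le_rfl)
  · -- μ < t
    push_neg at hc1 hc2
    set d : ℝ := t - μ with hd
    have hd0 : 0 < d := by simp [hd]; linarith
    have hub : ∀ y ∈ S, y ≤ σ^2/2 := by
      rintro y ⟨P, hP, hx2, ⟨a, hsymm⟩, hmean, hvar, hy⟩
      haveI := hP
      have := upper_bound P μ σ t 0 1 hx2 a hsymm hmean hvar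
        (fun u => bnd3 (t-μ) u (by linarith))
      rw [hy]
      linarith
    apply le_antisymm
    · exact csSup_le ⟨_, hmem 1 one_pos le_rfl⟩ hub
    · by_contra hcon
      push_neg at hcon
      set ε : ℝ := σ^2/2 - sSup S with hε
      have hε0 : 0 < ε := by simp [hε]; linarith
      set p : ℝ := min 1 (min (σ/(2*d)) (ε/(2*σ*d+1))) with hp
      have hp0 : 0 < p := by
        apply lt_min one_pos
        apply lt_min
        · positivity
        · positivity
      have hp1 : p ≤ 1 := min_le_left _ _
      have hpσ : p ≤ σ/(2*d) := le_trans (min_le_right _ _) (min_le_left _ _)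
      have hpε : p ≤ ε/(2*σ*d+1) := le_trans (min_le_right _ _) (min_le_right _ _)
      have hσp : 2*d ≤ σ/p := by
        rw [le_div_iff₀ hp0]
        have := (le_div_iff₀ (by positivity : (0:ℝ) < 2*d)).1 hpσ
        nlinarith
      have hσp0 : 0 < σ/p := by positivity
      have hv : ((1 - p^2) * (max (μ - t) 0)^2 + (p^2/2) * (max (μ - σ/p - t) 0)^2
          + (p^2/2) * (max (μ + σ/p - t) 0)^2) = (σ - p*d)^2/2 := by
        rw [max_eq_right (by linarith : μ - t ≤ (0:ℝ)),
          max_eq_right (by linarith : μ - σ/p - t ≤ (0:ℝ)),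
          max_eq_left (by linarith : (0:ℝ) ≤ μ + σ/p - t)]
        have e : μ + σ/p - t = σ/p - d := by rw [hd]; ring
        rw [e]
        field_simp
        ring
      have hle : (σ - p*d)^2/2 ≤ sSup S := le_csSup ⟨_, hub⟩ (hv ▸ hmem p hp0 hp1)
      have hgt : sSup S < (σ - p*d)^2/2 := by
        have h1 : σ*d*p < ε := by
          have h2 : σ*d*p ≤ σ*d*(ε/(2*σ*d+1)) := by
            apply mul_le_mul_of_nonneg_left hpε (by positivity)
          have h3 : σ*d*(ε/(2*σ*d+1)) < ε := by
            rw [mul_div_assoc', div_lt_iff₀ (by positivity : (0:ℝ) < 2*σ*d+1)]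
            nlinarith [mul_pos hε0 (by positivity : (0:ℝ) < σ*d+1)]
          exact lt_of_le_of_lt h2 h3
        have : σ^2/2 - σ*d*p ≤ (σ - p*d)^2/2 := by nlinarith [sq_nonneg (p*d)]
        simp only [hε] at h1
        linarith
      linarith
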